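/- Let G be a finite group of order n and t a positive integer. Then the number of elements of G whose order is a multiple of t is either zero or a multiple of the greatest divisor of n that is coprime to t. -/

import Mathlib

open Finset

namespace WeisnerAux

/-- the `π`-part of `d`, where `π` is the set of primes dividing `t`. -/
def piPart (t d : ℕ) : ℕ := Nat.gcd d (t ^ d)

variable {t d : ℕ}

lemma piPart_dvd : piPart t d ∣ d := Nat.gcd_dvd_left _ _

lemma prime_dvd_t_of_dvd_piPart (hd : d ≠ 0) {p : ℕ} (hp : p.Prime)
    (h : p ∣ piPart t d) : p ∣ t :=
  hp.dvd_of_dvd_pow (h.trans (Nat.gcd_dvd_right _ _))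

lemma ord_proj_dvd_piPart (hd : d ≠ 0) {p : ℕ} (hp : p.Prime) (hpt : p ∣ t) :
    p ^ d.factorization p ∣ piPart t d := by
  refine Nat.dvd_gcd (Nat.ordProj_dvd d p) ?_
  calc p ^ d.factorization p ∣ p ^ d := by
        exact pow_dvd_pow p (le_of_lt (Nat.factorization_lt p hd))
    _ ∣ t ^ d := pow_dvd_pow_of_dvd hpt d

lemma coprime_div_piPart (hd : d ≠ 0) : Nat.Coprime (d / piPart t d) t := by
  by_contra h
  obtain ⟨p, hp, hp1, hp2⟩ := Nat.Prime.not_coprime_iff_dvd.mp h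
  have h1 : p ^ d.factorization p ∣ piPart t d := ord_proj_dvd_piPart hd hp hp2
  have h2 : p ^ (d.factorization p + 1) ∣ d := by
    have := mul_dvd_mul h1 hp1
    rwa [Nat.mul_div_cancel' (piPart_dvd (t := t)), ← pow_succ] at this
  exact Nat.pow_succ_factorization_not_dvd hd hp h2

lemma coprime_piPart_div (hd : d ≠ 0) : Nat.Coprime (piPart t d) (d / piPart t d) := by
  by_contra h
  obtain ⟨p, hp, hp1, hp2⟩ := Nat.Prime.not_coprime_iff_dvd.mp h
  have hpt : p ∣ t := prime_dvd_t_of_dvd_piPart hd hp hp1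
  have h1 : p ^ d.factorization p ∣ piPart t d := ord_proj_dvd_piPart hd hp hpt
  have h2 : p ^ (d.factorization p + 1) ∣ d := by
    have := mul_dvd_mul h1 hp2
    rwa [Nat.mul_div_cancel' (piPart_dvd (t := t)), ← pow_succ] at this
  exact Nat.pow_succ_factorization_not_dvd hd hp h2

lemma piPart_mul_div : piPart t d * (d / piPart t d) = d :=
  Nat.mul_div_cancel' piPart_dvd

/-- a π-number `m` dividing `d` divides `t ^ d`. -/
lemma pi_number_dvd_pow {m : ℕ} (hm : m ≠ 0) (ht : t ≠ 0) (hmd : m ∣ d) (hd0 : d ≠ 0)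
    (h : ∀ p : ℕ, p.Prime → p ∣ m → p ∣ t) : m ∣ t ^ d := by
  have htd : t ^ d ≠ 0 := pow_ne_zero _ ht
  rw [← Nat.factorization_le_iff_dvd hm htd, Finsupp.le_def]
  intro p
  by_cases hp : p.Prime
  · by_cases hpm : p ∣ m
    · have hpt := h p hp hpm
      have h1 : m.factorization p < m := Nat.factorization_lt p hm
      have h2 : m ≤ d := Nat.le_of_dvd (Nat.pos_of_ne_zero hd0) hmd
      have h3 : 1 ≤ t.factorization p := hp.factorization_pos_of_dvd ht hpt
      have : (t ^ d).factorization p = d * t.factorization p := by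
        rw [Nat.factorization_pow]; simp
      rw [this]
      calc m.factorization p ≤ d := le_trans h1.le h2
        _ = d * 1 := (mul_one d).symm
        _ ≤ d * t.factorization p := Nat.mul_le_mul_left d h3
    · simp [Nat.factorization_eq_zero_of_not_dvd hpm]
  · simp [Nat.factorization_eq_zero_of_not_prime _ hp]

/-- a π-number `m` dividing `d` divides `piPart t d`. -/
lemma pi_number_dvd_piPart {m : ℕ} (hm : m ≠ 0) (ht : t ≠ 0) (hmd : m ∣ d) (hd0 : d ≠ 0)
    (h : ∀ p : ℕ, p.Prime → p ∣ m → p ∣ t) : m ∣ piPart t d :=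
  Nat.dvd_gcd hmd (pi_number_dvd_pow hm ht hmd hd0 h)

/-- helper: coprimality of a π-number against a number coprime to `t`. -/
lemma coprime_of_pi {a b : ℕ} (ha : ∀ p : ℕ, p.Prime → p ∣ a → p ∣ t)
    (hb : Nat.Coprime b t) : Nat.Coprime a b := by
  by_contra hcon
  obtain ⟨p, hp, hp1, hp2⟩ := Nat.Prime.not_coprime_iff_dvd.mp hcon
  have hd : p ∣ Nat.gcd b t := Nat.dvd_gcd hp2 (ha p hp hp1)
  rw [Nat.Coprime] at hb
  rw [hb] at hd
  exact hp.one_lt.ne' (Nat.dvd_one.mp hd)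



section Elements

variable {G : Type*} [Group G] [Fintype G]

/-- the `π`-part of a group element, `π` = primes dividing `t`. -/
noncomputable def uPart (t : ℕ) (x : G) : G :=
  x ^ ((orderOf x / piPart t (orderOf x)) ^ Nat.totient (piPart t (orderOf x)))

/-- the `π'`-part of a group element. -/
noncomputable def vPart (t : ℕ) (x : G) : G :=
  x ^ ((piPart t (orderOf x)) ^ Nat.totient (orderOf x / piPart t (orderOf x)))

variable (t : ℕ)

lemma part_spec (x : G) :
    uPart t x * vPart t x = x ∧ orderOf (uPart t x) = piPart t (orderOf x) ∧
      orderOf (vPart t x) = orderOf x / piPart t (orderOf x) := by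
  have hd : 0 < orderOf x := orderOf_pos x
  set d := orderOf x with hdd
  set a := piPart t d with hadef
  set b := d / piPart t d with hbdef
  have hab : a * b = d := piPart_mul_div
  have cop : Nat.Coprime a b := coprime_piPart_div hd.ne'
  have ha : 0 < a := Nat.pos_of_dvd_of_pos piPart_dvd hd
  have hb : 0 < b := Nat.pos_of_ne_zero (by
    intro h; rw [h, mul_zero] at hab; exact hd.ne' hab.symm)
  set e₁ := b ^ Nat.totient a with he1
  set e₂ := a ^ Nat.totient b with he2
  have hue : uPart t x = x ^ e₁ := rfl
  have hve : vPart t x = x ^ e₂ := rfl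
  have hta : 0 < Nat.totient a := Nat.totient_pos.mpr ha
  have htb : 0 < Nat.totient b := Nat.totient_pos.mpr hb
  have h1a : e₁ ≡ 1 [MOD a] := Nat.ModEq.pow_totient cop.symm
  have h2b : e₂ ≡ 1 [MOD b] := Nat.ModEq.pow_totient cop
  have h2a : e₂ ≡ 0 [MOD a] := (Nat.modEq_zero_iff_dvd).mpr (dvd_pow_self a htb.ne')
  have h1b : e₁ ≡ 0 [MOD b] := (Nat.modEq_zero_iff_dvd).mpr (dvd_pow_self b hta.ne')
  have hmoda : e₁ + e₂ ≡ 1 [MOD a] := by simpa using h1a.add h2a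
  have hmodb : e₁ + e₂ ≡ 1 [MOD b] := by simpa using h1b.add h2b
  have hmodd : e₁ + e₂ ≡ 1 [MOD d] := by
    rw [← hab]
    exact (Nat.modEq_and_modEq_iff_modEq_mul cop).mp ⟨hmoda, hmodb⟩
  have hmul : uPart t x * vPart t x = x := by
    rw [hue, hve, ← pow_add]
    calc x ^ (e₁ + e₂) = x ^ 1 := pow_eq_pow_iff_modEq.mpr (by rw [← hdd]; exact hmodd)
      _ = x := pow_one x
  have hua : orderOf (uPart t x) ∣ a := by
    rw [hue, orderOf_dvd_iff_pow_eq_one, ← pow_mul, ← orderOf_dvd_iff_pow_eq_one, ← hdd, ← hab,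
      he1]
    calc a * b ∣ b ^ Nat.totient a * a := by
          rw [mul_comm a b]
          exact Nat.mul_dvd_mul_right (dvd_pow_self b hta.ne') a
      _ = _ := rfl
  have hvb : orderOf (vPart t x) ∣ b := by
    rw [hve, orderOf_dvd_iff_pow_eq_one, ← pow_mul, ← orderOf_dvd_iff_pow_eq_one, ← hdd, ← hab,
      he2]
    exact Nat.mul_dvd_mul_right (dvd_pow_self a htb.ne') b
  have hcomm : Commute (uPart t x) (vPart t x) := by
    rw [hue, hve]; exact Commute.pow_pow_self x e₁ e₂
  have hddvd : d ∣ orderOf (uPart t x) * orderOf (vPart t x) := by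
    have := hcomm.orderOf_mul_dvd_mul_orderOf
    rw [hmul, ← hdd] at this
    exact this
  have heq : orderOf (uPart t x) * orderOf (vPart t x) = a * b := by
    refine Nat.dvd_antisymm (mul_dvd_mul hua hvb) ?_
    rw [hab]; exact hddvd
  obtain ⟨r, hr⟩ := hvb
  have hov : 0 < orderOf (vPart t x) := orderOf_pos _
  have hcancel : orderOf (uPart t x) = a * r := by
    have h2 : orderOf (vPart t x) * orderOf (uPart t x) = orderOf (vPart t x) * (a * r) := by
      calc orderOf (vPart t x) * orderOf (uPart t x)
          = orderOf (uPart t x) * orderOf (vPart t x) := mul_comm _ _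
        _ = a * b := heq
        _ = a * (orderOf (vPart t x) * r) := by rw [hr]
        _ = orderOf (vPart t x) * (a * r) := by ring
    exact Nat.eq_of_mul_eq_mul_left hov h2
  have hu_eq : orderOf (uPart t x) = a := Nat.dvd_antisymm hua ⟨r, hcancel⟩
  have hv_eq : orderOf (vPart t x) = b := by
    have h3 := heq
    rw [hu_eq] at h3
    exact Nat.eq_of_mul_eq_mul_left ha h3
  exact ⟨hmul, hu_eq, hv_eq⟩

lemma parts_of_mul {u v : G} (ht : t ≠ 0) (hc : Commute u v)
    (hu : ∀ p : ℕ, p.Prime → p ∣ orderOf u → p ∣ t) (hv : Nat.Coprime (orderOf v) t) :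
    orderOf (u * v) = orderOf u * orderOf v ∧ piPart t (orderOf (u * v)) = orderOf u ∧
      uPart t (u * v) = u ∧ vPart t (u * v) = v := by
  have cop : Nat.Coprime (orderOf u) (orderOf v) := coprime_of_pi hu hv
  have hord : orderOf (u * v) = orderOf u * orderOf v :=
    hc.orderOf_mul_eq_mul_orderOf_of_coprime cop
  have hou : 0 < orderOf u := orderOf_pos u
  have hov : 0 < orderOf v := orderOf_pos v
  have hd : orderOf (u * v) ≠ 0 := (orderOf_pos _).ne'
  have hpi : piPart t (orderOf (u * v)) = orderOf u := by
    refine Nat.dvd_antisymm ?_ ?_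
    · have h1 : piPart t (orderOf (u * v)) ∣ orderOf u * orderOf v := by
        rw [← hord]; exact piPart_dvd
      have h2 : Nat.Coprime (piPart t (orderOf (u * v))) (orderOf v) :=
        coprime_of_pi (fun p hp hdvd => prime_dvd_t_of_dvd_piPart hd hp hdvd) hv
      exact h2.dvd_of_dvd_mul_right h1
    · exact pi_number_dvd_piPart hou.ne' ht (hord ▸ dvd_mul_right _ _) hd hu
  have hb : orderOf (u * v) / piPart t (orderOf (u * v)) = orderOf v := by
    rw [hpi, hord, Nat.mul_div_cancel_left _ hou]
  constructor
  · exact hord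
  refine ⟨hpi, ?_, ?_⟩
  · show (u * v) ^ _ = u
    rw [hb, hpi, hc.mul_pow]
    have h3 : u ^ orderOf v ^ (orderOf u).totient = u := by
      have : orderOf v ^ (orderOf u).totient ≡ 1 [MOD orderOf u] :=
        Nat.ModEq.pow_totient cop.symm
      calc u ^ orderOf v ^ (orderOf u).totient = u ^ 1 := pow_eq_pow_iff_modEq.mpr this
        _ = u := pow_one u
    have h4 : v ^ orderOf v ^ (orderOf u).totient = 1 := by
      rw [← orderOf_dvd_iff_pow_eq_one]
      exact dvd_pow_self _ (Nat.totient_pos.mpr hou).ne'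
    rw [h3, h4, mul_one]
  · show (u * v) ^ _ = v
    rw [hb, hpi, hc.mul_pow]
    have h3 : u ^ orderOf u ^ (orderOf v).totient = 1 := by
      rw [← orderOf_dvd_iff_pow_eq_one]
      exact dvd_pow_self _ (Nat.totient_pos.mpr hov).ne'
    have h4 : v ^ orderOf u ^ (orderOf v).totient = v := by
      have : orderOf u ^ (orderOf v).totient ≡ 1 [MOD orderOf v] :=
        Nat.ModEq.pow_totient cop
      calc v ^ orderOf u ^ (orderOf v).totient = v ^ 1 := pow_eq_pow_iff_modEq.mpr this
        _ = v := pow_one v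
    rw [h3, h4, one_mul]

/-- `u` is a `π`-element for `π` = primes of `t`. -/
def IsPi (t : ℕ) (u : G) : Prop := ∀ p : ℕ, p.Prime → p ∣ orderOf u → p ∣ t

lemma commute_uv (x : G) : Commute (uPart t x) (vPart t x) := Commute.pow_pow_self x _ _

lemma uPart_isPi (x : G) : IsPi t (uPart t x) := by
  intro p hp hdvd
  rw [(part_spec t x).2.1] at hdvd
  exact prime_dvd_t_of_dvd_piPart (orderOf_pos x).ne' hp hdvd

lemma vPart_coprime (x : G) : Nat.Coprime (orderOf (vPart t x)) t := by
  rw [(part_spec t x).2.2]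
  exact coprime_div_piPart (orderOf_pos x).ne'

lemma orderOf_conj (g u : G) : orderOf (g * u * g⁻¹) = orderOf u := by
  have := orderOf_injective (MulAut.conj g).toMonoidHom (MulAut.conj g).injective u
  simpa using this

lemma isPi_conj (g u : G) (h : IsPi t u) : IsPi t (g * u * g⁻¹) := by
  intro p hp hdvd
  rw [orderOf_conj] at hdvd
  exact h p hp hdvd

/-- the number of elements of order coprime to `t`. -/
noncomputable def aCnt (t : ℕ) (H : Type*) [Group H] : ℕ :=
  Nat.card {v : H // (orderOf v).Coprime t}

open scoped Classical in
lemma aCnt_eq_card (H : Type*) [Group H] [Fintype H] :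
    aCnt t H = (univ.filter fun v : H => (orderOf v).Coprime t).card := by
  rw [aCnt, Nat.card_eq_fintype_card]
  convert Fintype.card_subtype _

open scoped Classical in
lemma key_count (ht : t ≠ 0) (S : ℕ → Prop) :
    (univ.filter fun x : G => S (piPart t (orderOf x))).card
      = ∑ u ∈ univ.filter (fun u : G => IsPi t u ∧ S (orderOf u)),
          aCnt t (Subgroup.centralizer {u}) := by
  rw [Finset.card_eq_sum_card_fiberwise (f := uPart t)
    (t := univ.filter (fun u : G => IsPi t u ∧ S (orderOf u))) ?_]
  · refine Finset.sum_congr rfl fun u hu => ?_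
    simp only [mem_filter, mem_univ, true_and] at hu
    obtain ⟨hupi, huS⟩ := hu
    rw [aCnt_eq_card]
    refine Finset.card_bij' (fun x hx => ?_) (fun v hv => u * (v : G)) ?_ ?_ ?_ ?_
    · -- i : map x in fiber to vPart
      refine ⟨vPart t x, ?_⟩
      simp only [mem_filter, mem_univ, true_and] at hx
      rw [Subgroup.mem_centralizer_iff]
      intro h hh
      rw [Set.mem_singleton_iff] at hh
      subst hh
      have := (commute_uv t x).symm
      rw [hx.2] at this
      exact this.symm
    · -- i lands in target
      intro x hx
      simp only [mem_filter, mem_univ, true_and]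
      rw [Subgroup.orderOf_mk]
      exact vPart_coprime t x
    · -- j lands in source
      intro v hv
      simp only [mem_filter, mem_univ, true_and] at hv ⊢
      have hc : Commute u (v : G) := by
        have := v.2
        rw [Subgroup.mem_centralizer_iff] at this
        exact this u (Set.mem_singleton u)
      have hvc : Nat.Coprime (orderOf (v : G)) t := by
        rw [Subgroup.orderOf_coe]; exact hv
      obtain ⟨_, hpi, hup, _⟩ := parts_of_mul t ht hc hupi hvc
      constructor
      · rw [hpi]; exact huS
      · exact hup
    · -- left inverse
      intro x hx
      simp only [mem_filter, mem_univ, true_and] at hx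
      show u * vPart t x = x
      rw [← hx.2]
      exact (part_spec t x).1
    · -- right inverse
      intro v hv
      simp only [mem_filter, mem_univ, true_and] at hv
      have hc : Commute u (v : G) := by
        have := v.2
        rw [Subgroup.mem_centralizer_iff] at this
        exact this u (Set.mem_singleton u)
      have hvc : Nat.Coprime (orderOf (v : G)) t := by
        rw [Subgroup.orderOf_coe]; exact hv
      obtain ⟨_, _, _, hvp⟩ := parts_of_mul t ht hc hupi hvc
      exact Subtype.ext hvp
  · intro x hx
    simp only [mem_coe, mem_filter, mem_univ, true_and] at hx ⊢
    refine ⟨uPart_isPi t x, ?_⟩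
    rw [(part_spec t x).2.1]
    exact hx

open scoped Classical in
lemma card_conjClass_mul_card_centralizer (u : G) :
    (univ.filter fun w : G => IsConj u w).card
      * Fintype.card (Subgroup.centralizer ({u} : Set G)) = Fintype.card G := by
  have hmem : ∀ g : G, (fun g : G => g * u * g⁻¹) g ∈ univ.filter fun w : G => IsConj u w := by
    intro g
    simp only [mem_filter, mem_univ, true_and]
    exact isConj_iff.mpr ⟨g, rfl⟩
  have h := Finset.card_eq_sum_card_fiberwise (s := (univ : Finset G))
    (t := univ.filter fun w : G => IsConj u w) (f := fun g : G => g * u * g⁻¹)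
    (fun g _ => hmem g)
  rw [card_univ] at h
  have hfib : ∀ w ∈ univ.filter (fun w : G => IsConj u w),
      (univ.filter fun g : G => g * u * g⁻¹ = w).card
        = Fintype.card (Subgroup.centralizer ({u} : Set G)) := by
    intro w hw
    simp only [mem_filter, mem_univ, true_and] at hw
    obtain ⟨g₀, hg₀⟩ := isConj_iff.mp hw
    rw [← card_univ]
    refine Finset.card_bij' (fun g hg => ⟨g₀⁻¹ * g, ?_⟩) (fun c _ => g₀ * (c : G)) ?_ ?_ ?_ ?_
    · simp only [mem_filter, mem_univ, true_and] at hg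
      rw [Subgroup.mem_centralizer_iff]
      intro h hh
      rw [Set.mem_singleton_iff] at hh
      rw [hh]
      have key : g * u * g⁻¹ = g₀ * u * g₀⁻¹ := by rw [hg, hg₀]
      calc u * (g₀⁻¹ * g) = g₀⁻¹ * (g₀ * u * g₀⁻¹) * g := by group
        _ = g₀⁻¹ * (g * u * g⁻¹) * g := by rw [key]
        _ = (g₀⁻¹ * g) * u := by group
    · intro g hg; exact mem_univ _
    · intro c _
      simp only [mem_filter, mem_univ, true_and]
      have hc := c.2
      rw [Subgroup.mem_centralizer_iff] at hc
      have hcu : u * (c : G) = (c : G) * u := hc u (Set.mem_singleton u)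
      calc g₀ * (c : G) * u * (g₀ * (c : G))⁻¹
          = g₀ * ((c : G) * u * (c : G)⁻¹) * g₀⁻¹ := by group
        _ = g₀ * u * g₀⁻¹ := by rw [← hcu]; group
        _ = w := hg₀
    · intro g hg; simp [mul_assoc]
    · intro c _; ext; simp [mul_assoc]
  calc (univ.filter fun w : G => IsConj u w).card
        * Fintype.card (Subgroup.centralizer ({u} : Set G))
      = ∑ _w ∈ univ.filter (fun w : G => IsConj u w),
          Fintype.card (Subgroup.centralizer ({u} : Set G)) := by rw [sum_const, smul_eq_mul]
    _ = ∑ w ∈ univ.filter (fun w : G => IsConj u w),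
          (univ.filter fun g : G => g * u * g⁻¹ = w).card :=
        (Finset.sum_congr rfl hfib).symm
    _ = Fintype.card G := h.symm

open scoped Classical in
lemma orb_dvd (q k : ℕ) (F : G → ℕ) (hF : ∀ g w : G, F (g * w * g⁻¹) = F w) :
    ∀ W : Finset G, (∀ g w : G, w ∈ W → g * w * g⁻¹ ∈ W) →
    (∀ w ∈ W, ∀ m : ℕ,
      m * Fintype.card (Subgroup.centralizer ({w} : Set G)) = Fintype.card G →
        q ^ k ∣ m * F w) →
    q ^ k ∣ ∑ w ∈ W, F w := by
  intro W
  induction W using Finset.strongInduction with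
  | _ W ih =>
    intro hW hdvd
    rcases W.eq_empty_or_nonempty with rfl | ⟨u, hu⟩
    · simp
    · set O := W.filter (fun w => IsConj u w) with hO
      have hOW : O ⊆ W := filter_subset _ _
      have hOcl : O = univ.filter (fun w : G => IsConj u w) := by
        ext w
        simp only [hO, mem_filter, mem_univ, true_and, and_iff_right_iff_imp]
        intro hconj
        obtain ⟨g, hg⟩ := isConj_iff.mp hconj
        rw [← hg]
        exact hW g u hu
      have hsumO : ∑ w ∈ O, F w = O.card * F u := by
        have hc : ∀ w ∈ O, F w = F u := by
          intro w hw
          obtain ⟨g, hg⟩ := isConj_iff.mp ((mem_filter.mp hw).2)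
          rw [← hg, hF]
        rw [Finset.sum_congr rfl hc, sum_const, smul_eq_mul]
      have hcard : O.card * Fintype.card (Subgroup.centralizer ({u} : Set G))
          = Fintype.card G := by
        rw [hOcl]; exact card_conjClass_mul_card_centralizer u
      have hqO : q ^ k ∣ ∑ w ∈ O, F w := by
        rw [hsumO]; exact hdvd u hu O.card hcard
      have hOne : O.Nonempty := ⟨u, mem_filter.mpr ⟨hu, IsConj.refl u⟩⟩
      have hss : W \ O ⊂ W := Finset.sdiff_ssubset hOW hOne
      have hrest : q ^ k ∣ ∑ w ∈ W \ O, F w := by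
        refine ih (W \ O) hss ?_ ?_
        · intro g w hw
          rw [mem_sdiff] at hw ⊢
          refine ⟨hW g w hw.1, ?_⟩
          intro hmem
          refine hw.2 ?_
          rw [hOcl] at hmem ⊢
          simp only [mem_filter, mem_univ, true_and] at hmem ⊢
          exact hmem.trans (isConj_iff.mpr ⟨g, rfl⟩).symm
        · intro w hw
          exact hdvd w (mem_sdiff.mp hw).1
      calc q ^ k ∣ ∑ w ∈ W \ O, F w + ∑ w ∈ O, F w := dvd_add hrest hqO
        _ = ∑ w ∈ W, F w := Finset.sum_sdiff hOW

lemma aCnt_congr {H K : Type*} [Group H] [Group K] (e : H ≃* K) : aCnt t H = aCnt t K := by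
  refine Nat.card_congr (Equiv.subtypeEquiv e.toEquiv fun v => ?_)
  have h := orderOf_injective e.toMonoidHom e.injective v
  simp only [MulEquiv.coe_toMonoidHom] at h
  rw [show e.toEquiv v = e v from rfl, h]

lemma centralizer_conj_eq (g u : G) :
    Subgroup.centralizer ({g * u * g⁻¹} : Set G)
      = (Subgroup.centralizer ({u} : Set G)).map (MulAut.conj g).toMonoidHom := by
  ext x
  simp only [Subgroup.mem_map, Subgroup.mem_centralizer_iff, Set.mem_singleton_iff,
    MulEquiv.coe_toMonoidHom, MulAut.conj_apply]
  constructor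
  · intro h
    have h1 : (g * u * g⁻¹) * x = x * (g * u * g⁻¹) := h _ rfl
    have h2 : g * (u * (g⁻¹ * x * g)) * g⁻¹ = g * ((g⁻¹ * x * g) * u) * g⁻¹ := by
      calc g * (u * (g⁻¹ * x * g)) * g⁻¹ = (g * u * g⁻¹) * x := by group
        _ = x * (g * u * g⁻¹) := h1
        _ = g * ((g⁻¹ * x * g) * u) * g⁻¹ := by group
    have key := mul_left_cancel (mul_right_cancel h2)
    exact ⟨g⁻¹ * x * g, fun y hy => hy ▸ key, by group⟩
  · rintro ⟨y, hy, rfl⟩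
    intro z hz
    subst hz
    have h1 : u * y = y * u := hy u rfl
    calc (g * u * g⁻¹) * (g * y * g⁻¹) = g * (u * y) * g⁻¹ := by group
      _ = g * (y * u) * g⁻¹ := by rw [h1]
      _ = (g * y * g⁻¹) * (g * u * g⁻¹) := by group

lemma aCnt_centralizer_conj (g u : G) :
    aCnt t (Subgroup.centralizer ({g * u * g⁻¹} : Set G))
      = aCnt t (Subgroup.centralizer ({u} : Set G)) := by
  rw [centralizer_conj_eq]
  exact (aCnt_congr t
    (((MulAut.conj g) : G ≃* G).subgroupMap (Subgroup.centralizer ({u} : Set G)))).symm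

lemma centralizer_eq_top_of_center {u : G} (h : u ∈ Subgroup.center G) :
    Subgroup.centralizer ({u} : Set G) = ⊤ :=
  Subgroup.centralizer_eq_top_iff_subset.mpr (Set.singleton_subset_iff.mpr h)

lemma center_of_conj_center {g w : G} (hc : g * w * g⁻¹ ∈ Subgroup.center G) :
    w ∈ Subgroup.center G := by
  have hz := Subgroup.mem_center_iff.mp hc g
  have hw : w = g * w * g⁻¹ := by
    have h1 : g * (g * w * g⁻¹) = (g * w * g⁻¹) * g := hz
    calc w = g⁻¹ * ((g * w * g⁻¹) * g) := by group
      _ = g⁻¹ * (g * (g * w * g⁻¹)) := by rw [h1]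
      _ = g * w * g⁻¹ := by group
  rw [hw]
  exact hc

/-- the subgroup of central `π`-elements. -/
def ZPi (t : ℕ) (G : Type*) [Group G] : Subgroup G where
  carrier := {u | u ∈ Subgroup.center G ∧ IsPi t u}
  one_mem' := ⟨Subgroup.one_mem _, fun p hp hdvd => by
    rw [orderOf_one] at hdvd
    exact absurd (Nat.dvd_one.mp hdvd) hp.ne_one⟩
  mul_mem' := by
    rintro a b ⟨hac, hapi⟩ ⟨hbc, hbpi⟩
    refine ⟨Subgroup.mul_mem _ hac hbc, fun p hp hdvd => ?_⟩
    have hcomm : Commute a b := (Subgroup.mem_center_iff.mp hac b).symm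
    have hdd : orderOf (a * b) ∣ orderOf a * orderOf b := hcomm.orderOf_mul_dvd_mul_orderOf
    rcases (Nat.Prime.dvd_mul hp).mp (hdvd.trans hdd) with h | h
    · exact hapi p hp h
    · exact hbpi p hp h
  inv_mem' := by
    rintro a ⟨hac, hapi⟩
    refine ⟨Subgroup.inv_mem _ hac, fun p hp hdvd => ?_⟩
    rw [orderOf_inv] at hdvd
    exact hapi p hp hdvd

lemma mem_ZPi_iff {t : ℕ} {u : G} :
    u ∈ ZPi t G ↔ u ∈ Subgroup.center G ∧ IsPi t u := Iff.rfl

end Elements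

/-- Frobenius-type theorem: for a prime `q` not dividing `t`, the full `q`-part of `|H|`
divides the number of elements of `H` of order coprime to `t`. -/
theorem thmA (t : ℕ) (ht : t ≠ 0) (n : ℕ) :
    ∀ (H : Type u) [Group H] [Fintype H], Fintype.card H = n →
      ∀ q : ℕ, q.Prime → ¬ q ∣ t →
        q ^ ((Fintype.card H).factorization q) ∣ aCnt t H := by
  induction n using Nat.strong_induction_on with
  | _ n ih =>
    intro H _ _ hcard q hq hqt
    classical
    subst hcard
    set k := (Fintype.card H).factorization q with hk
    have hkey := key_count (G := H) t ht (fun _ => True)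
    simp only [Finset.filter_true, Finset.card_univ, and_true] at hkey
    set U := univ.filter (fun u : H => IsPi t u) with hU
    set Zf := U.filter (fun u => u ∈ Subgroup.center H) with hZf
    set Nf := U.filter (fun u => ¬ u ∈ Subgroup.center H) with hNf
    have hsplit : ∑ u ∈ U, aCnt t (Subgroup.centralizer ({u} : Set H))
        = ∑ u ∈ Zf, aCnt t (Subgroup.centralizer ({u} : Set H))
          + ∑ u ∈ Nf, aCnt t (Subgroup.centralizer ({u} : Set H)) :=
      (Finset.sum_filter_add_sum_filter_not U _ _).symm
    have hZsum : ∑ u ∈ Zf, aCnt t (Subgroup.centralizer ({u} : Set H))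
        = Zf.card * aCnt t H := by
      rw [Finset.sum_congr rfl (fun u hu => ?_), sum_const, smul_eq_mul]
      have hcen : u ∈ Subgroup.center H := (mem_filter.mp hu).2
      rw [centralizer_eq_top_of_center hcen]
      exact aCnt_congr t Subgroup.topEquiv
    have hNsum : q ^ k ∣ ∑ u ∈ Nf, aCnt t (Subgroup.centralizer ({u} : Set H)) := by
      refine orb_dvd q k (fun u => aCnt t (Subgroup.centralizer ({u} : Set H)))
        (fun g w => aCnt_centralizer_conj t g w) Nf ?_ ?_
      · intro g w hw
        simp only [hNf, hU, mem_filter, mem_univ, true_and] at hw ⊢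
        exact ⟨isPi_conj t g w hw.1, fun hcc => hw.2 (center_of_conj_center hcc)⟩
      · intro w hw m hm
        simp only [hNf, hU, mem_filter, mem_univ, true_and] at hw
        have hCne : Subgroup.centralizer ({w} : Set H) ≠ ⊤ := by
          intro hcon
          exact hw.2 (Set.singleton_subset_iff.mp
            (Subgroup.centralizer_eq_top_iff_subset.mp hcon))
        have hCpos : 0 < Fintype.card (Subgroup.centralizer ({w} : Set H)) :=
          Fintype.card_pos
        have hmpos : 0 < m := by
          rcases Nat.eq_zero_or_pos m with h0 | h; · rw [h0, zero_mul] at hm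
                                                     exact absurd hm.symm Fintype.card_ne_zero
          exact h
        have hClt : Fintype.card (Subgroup.centralizer ({w} : Set H)) < Fintype.card H := by
          have hle := Subgroup.card_le_card_group (Subgroup.centralizer ({w} : Set H))
          rw [Nat.card_eq_fintype_card, Nat.card_eq_fintype_card] at hle
          rcases lt_or_eq_of_le hle with h | h
          · exact h
          · exact absurd (Subgroup.eq_top_of_card_eq _
              (by simp [Nat.card_eq_fintype_card, h])) hCne
        have hIH := ih _ hClt (Subgroup.centralizer ({w} : Set H)) rfl q hq hqt
        have hfact : k = m.factorization q
            + (Fintype.card (Subgroup.centralizer ({w} : Set H))).factorization q := by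
          rw [hk, ← hm, Nat.factorization_mul hmpos.ne' hCpos.ne']
          simp
        rw [hfact, pow_add]
        exact mul_dvd_mul (Nat.ordProj_dvd m q) hIH
    -- combine
    have hqcard : q ^ k ∣ Fintype.card H := Nat.ordProj_dvd _ q
    have hZdvd : q ^ k ∣ Zf.card * aCnt t H := by
      have h1 : Fintype.card H = Zf.card * aCnt t H
          + ∑ u ∈ Nf, aCnt t (Subgroup.centralizer ({u} : Set H)) := by
        rw [hkey, hsplit, hZsum]
      have := hqcard
      rw [h1] at this
      exact (Nat.dvd_add_right hNsum).mp (by rwa [add_comm] at this)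
    -- q does not divide Zf.card
    have hZcard : Zf.card = Fintype.card (ZPi t H) := by
      have hZeq : Zf = univ.filter (fun u : H => u ∈ ZPi t H) := by
        ext u
        simp only [hZf, hU, Finset.filter_filter, mem_filter, mem_univ, true_and,
          mem_ZPi_iff]
        tauto
      rw [hZeq, Fintype.card_subtype]
    have hqZ : ¬ q ∣ Zf.card := by
      intro hdvd
      rw [hZcard] at hdvd
      haveI := Fact.mk hq
      obtain ⟨x, hx⟩ := exists_prime_orderOf_dvd_card (G := ZPi t H) q hdvd
      have hxord : orderOf (x : H) = q := by rw [Subgroup.orderOf_coe, hx]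
      exact hqt (x.2.2 q hq (by rw [hxord]))
    have hcop : Nat.Coprime (q ^ k) Zf.card :=
      Nat.Coprime.pow_left k (hq.coprime_iff_not_dvd.mpr hqZ)
    exact hcop.dvd_of_dvd_mul_left hZdvd


/-- Weisner core: for every prime `q` not dividing `t`, the full `q`-part of `|G|`
divides the number of elements whose order is a multiple of `t`. -/
theorem weisner_core (t : ℕ) (ht : t ≠ 0) {G : Type*} [Group G] [Fintype G]
    (q : ℕ) (hq : q.Prime) (hqt : ¬ q ∣ t) :
    q ^ ((Fintype.card G).factorization q) ∣ Nat.card {g : G // t ∣ orderOf g} := by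
  classical
  have hiff : ∀ x : G, (t ∣ orderOf x) ↔ t ∣ piPart t (orderOf x) := by
    intro x
    constructor
    · intro h
      exact Nat.dvd_gcd h (dvd_pow_self t (orderOf_pos x).ne')
    · intro h
      exact h.trans piPart_dvd
  have hcount : Nat.card {g : G // t ∣ orderOf g}
      = (univ.filter fun x : G => t ∣ piPart t (orderOf x)).card := by
    rw [Nat.card_eq_fintype_card, Fintype.card_subtype]
    exact congrArg Finset.card (Finset.filter_congr (fun x _ => hiff x))
  have hk := key_count (G := G) t ht (fun d => t ∣ d)
  beta_reduce at hk
  rw [Finset.filter_congr_decidable] at hk hcount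
  rw [hcount, hk]
  refine orb_dvd q _ _ (fun g w => aCnt_centralizer_conj t g w) _ ?_ ?_
  · intro g w hw
    simp only [mem_filter, mem_univ, true_and] at hw ⊢
    exact ⟨isPi_conj t g w hw.1, by rw [orderOf_conj]; exact hw.2⟩
  · intro w hw m hm
    have hIH := thmA t ht (Fintype.card (Subgroup.centralizer ({w} : Set G)))
      (Subgroup.centralizer ({w} : Set G)) rfl q hq hqt
    have hCpos : (0:ℕ) < Fintype.card (Subgroup.centralizer ({w} : Set G)) := Fintype.card_pos
    have hmpos : 0 < m := by
      rcases Nat.eq_zero_or_pos m with h0 | h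
      · rw [h0, zero_mul] at hm
        exact absurd hm.symm Fintype.card_ne_zero
      · exact h
    have hfact : (Fintype.card G).factorization q = m.factorization q
        + (Fintype.card (Subgroup.centralizer ({w} : Set G))).factorization q := by
      rw [← hm, Nat.factorization_mul hmpos.ne' hCpos.ne']
      simp
    rw [hfact, pow_add]
    exact mul_dvd_mul (Nat.ordProj_dvd m q) hIH

end WeisnerAux

/-- Weisner's theorem: in a finite group `G` of order `n`, the number of elements whose
order is a multiple of `t` is either zero or a multiple of the greatest divisor `D` of
`n` that is coprime to `t`. -/
theorem weisner_multiple (G : Type*) [Group G] [Fintype G] (t : ℕ) (ht : 0 < t)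
    (D : ℕ) (hD : D ∣ Fintype.card G) (hDt : Nat.Coprime D t)
    (hDmax : ∀ d, d ∣ Fintype.card G → Nat.Coprime d t → d ≤ D) :
    Nat.card {g : G // t ∣ orderOf g} = 0 ∨ D ∣ Nat.card {g : G // t ∣ orderOf g} := by
  rcases Nat.eq_zero_or_pos (Nat.card {g : G // t ∣ orderOf g}) with h0 | hpos
  · exact Or.inl h0
  right
  have hD0 : D ≠ 0 := by
    intro h
    rw [h] at hD
    exact Fintype.card_ne_zero (Nat.eq_zero_of_zero_dvd hD)
  rw [← Nat.factorization_le_iff_dvd hD0 hpos.ne', Finsupp.le_def]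
  intro p
  by_cases hp : p.Prime
  · by_cases hpD : p ∣ D
    · have hpt : ¬ p ∣ t := by
        intro hptd
        have : p ∣ Nat.gcd D t := Nat.dvd_gcd hpD hptd
        rw [Nat.Coprime] at hDt
        rw [hDt] at this
        exact hp.one_lt.ne' (Nat.dvd_one.mp this)
      have h1 : D.factorization p ≤ (Fintype.card G).factorization p :=
        Finsupp.le_def.mp
          ((Nat.factorization_le_iff_dvd hD0 Fintype.card_ne_zero).mpr hD) p
      have h2 := WeisnerAux.weisner_core t ht.ne' p hp hpt (G := G)
      have h3 : (Fintype.card G).factorization p ≤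
          (Nat.card {g : G // t ∣ orderOf g}).factorization p :=
        (Nat.Prime.pow_dvd_iff_le_factorization hp hpos.ne').mp h2
      exact le_trans h1 h3
    · simp [Nat.factorization_eq_zero_of_not_dvd hpD]
  · simp [Nat.factorization_eq_zero_of_not_prime _ hp]
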